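/- For every s ∈ (0,1], there exist an integer M ≥ 2, integers N_k ≥ 2 and digit sets B_k ⊆ {0,…,N_k−1} with #B_k ≥ 2 (k = 1,…,M), and a probability vector (p₁,…,p_M) with all p_k > 0, such that (∑_{k=1}^M p_k log #B_k)/(∑_{k=1}^M p_k log N_k) = s. -/

import Mathlib

theorem stmt17 (s : ℝ) (hs : s ∈ Set.Ioc (0 : ℝ) 1) :
    ∃ (M : ℕ) (N : Fin M → ℕ) (B : Fin M → Finset ℕ) (p : Fin M → ℝ),
      2 ≤ M ∧ (∀ k, 2 ≤ N k) ∧ (∀ k, B k ⊆ Finset.range (N k)) ∧ (∀ k, 2 ≤ (B k).card) ∧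
      (∀ k, 0 < p k) ∧ (∑ k, p k = 1) ∧
      (∑ k, p k * Real.log ((B k).card)) / (∑ k, p k * Real.log (N k)) = s := by
  obtain ⟨hs0, hs1⟩ := hs
  have hlog2 : (0:ℝ) < Real.log 2 := Real.log_pos (by norm_num)
  rcases eq_or_lt_of_le hs1 with h1 | h1
  · refine ⟨2, fun _ => 2, fun _ => Finset.range 2, fun _ => 1/2, le_refl 2,
      fun k => le_refl 2, fun k => subset_rfl, fun k => by simp,
      fun k => by norm_num, by norm_num [Fin.sum_univ_two], ?_⟩
    simp only [Fin.sum_univ_two, Finset.card_range, Nat.cast_ofNat]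
    rw [h1]
    field_simp
  · -- s < 1
    set n : ℕ := ⌈1/s⌉₊ + 1 with hn
    have hn1 : (1:ℝ)/s ≤ ⌈1/s⌉₊ := Nat.le_ceil _
    have hnR : (1:ℝ)/s < n := by
      rw [hn]; push_cast; linarith
    have hsn : 1 < s * n := by
      rw [div_lt_iff₀ hs0] at hnR; linarith
    have hn2 : 2 ≤ n := by
      have : 1 ≤ ⌈1/s⌉₊ := Nat.one_le_ceil_iff.mpr (by positivity)
      rw [hn]; omega
    have hnm1 : (0:ℝ) < (n:ℝ) - 1 := by
      have : (2:ℝ) ≤ n := by exact_mod_cast hn2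
      linarith
    set p1 : ℝ := (1 - s) / (s * ((n:ℝ) - 1)) with hp1
    have hp1pos : 0 < p1 := div_pos (by linarith) (by positivity)
    have hp1lt : p1 < 1 := by
      rw [hp1, div_lt_one (by positivity)]
      nlinarith
    refine ⟨2, ![2^n, 2], fun _ => Finset.range 2, ![p1, 1 - p1], le_refl 2,
      ?_, fun k => ?_, fun k => by simp, ?_, by simp [Fin.sum_univ_two], ?_⟩
    · intro k
      fin_cases k
      · simp only [Matrix.cons_val_zero]
        calc 2 = 2^1 := rfl
        _ ≤ 2^n := Nat.pow_le_pow_right (by norm_num) (le_trans (by norm_num) hn2)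
      · simp
    · fin_cases k
      · simp only [Matrix.cons_val_zero]
        exact Finset.range_subset_range.mpr (by
          calc 2 ≤ 2^1 := by norm_num
          _ ≤ 2^n := Nat.pow_le_pow_right (by norm_num) (by omega))
      · simp
    · intro k
      fin_cases k
      · simpa using hp1pos
      · simpa using by linarith
    · simp only [Fin.sum_univ_two, Matrix.cons_val_zero, Matrix.cons_val_one, Matrix.head_cons]
      have hcast : ((2^n : ℕ) : ℝ) = (2:ℝ)^n := by push_cast; ring
      rw [show (Finset.range 2).card = 2 from Finset.card_range 2]
      rw [hcast, Real.log_pow]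
      simp only [Nat.cast_ofNat]
      have hnum : p1 * Real.log 2 + (1 - p1) * Real.log 2 = Real.log 2 := by ring
      have hden : p1 * ((n:ℝ) * Real.log 2) + (1 - p1) * Real.log 2
          = (p1 * ((n:ℝ) - 1) + 1) * Real.log 2 := by ring
      rw [hnum, hden]
      have hkey : p1 * ((n:ℝ) - 1) = (1 - s) / s := by
        rw [hp1]; field_simp
      rw [hkey]
      have : (1 - s) / s + 1 = 1 / s := by field_simp; ring
      rw [this]
      field_simp
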